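/- For all integers k ≥ 0 and 0 ≤ m ≤ k and all complex parameters z₁, z₂ ∈ ℂ, the function F_k^m : ℝ⁴ → ℂ is harmonic on ℝ⁴; that is, the sum of its four second partial derivatives vanishes identically: ∂²F_k^m/∂x² + ∂²F_k^m/∂y² + ∂²F_k^m/∂z² + ∂²F_k^m/∂w² = 0. -/

import Mathlib

/-- The polynomial `F_k^m(x,y,z,w) = (αz₁+βz₂)^m (-conj(β)z₁+conj(α)z₂)^{k-m}` where
`α = x+iy`, `β = z+iw`, with the convention that `F_k^m = 0` unless `0 ≤ m ≤ k`. -/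
noncomputable def Fkm (k : ℕ) (m : ℤ) (z₁ z₂ : ℂ) (p : Fin 4 → ℝ) : ℂ :=
  if 0 ≤ m ∧ m ≤ (k : ℤ) then
    (((p 0 : ℂ) + (p 1 : ℂ) * Complex.I) * z₁ +
        ((p 2 : ℂ) + (p 3 : ℂ) * Complex.I) * z₂) ^ m.toNat *
      ((-(starRingEnd ℂ) ((p 2 : ℂ) + (p 3 : ℂ) * Complex.I)) * z₁ +
        (starRingEnd ℂ) ((p 0 : ℂ) + (p 1 : ℂ) * Complex.I) * z₂) ^ (k - m.toNat)
  else 0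

noncomputable def projC (i : Fin 4) : (Fin 4 → ℝ) →L[ℝ] ℂ :=
  Complex.ofRealCLM.comp (ContinuousLinearMap.proj i)

noncomputable def Acl (z₁ z₂ : ℂ) : (Fin 4 → ℝ) →L[ℝ] ℂ :=
  z₁ • projC 0 + (z₁ * Complex.I) • projC 1 + z₂ • projC 2 + (z₂ * Complex.I) • projC 3

noncomputable def Bcl (z₁ z₂ : ℂ) : (Fin 4 → ℝ) →L[ℝ] ℂ :=
  z₂ • projC 0 + (-(z₂ * Complex.I)) • projC 1 + (-z₁) • projC 2 + (z₁ * Complex.I) • projC 3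

lemma Acl_apply (z₁ z₂ : ℂ) (p : Fin 4 → ℝ) :
    Acl z₁ z₂ p = ((p 0 : ℂ) + (p 1 : ℂ) * Complex.I) * z₁ +
      ((p 2 : ℂ) + (p 3 : ℂ) * Complex.I) * z₂ := by
  simp [Acl, projC]; ring

lemma Bcl_apply (z₁ z₂ : ℂ) (p : Fin 4 → ℝ) :
    Bcl z₁ z₂ p = (-(starRingEnd ℂ) ((p 2 : ℂ) + (p 3 : ℂ) * Complex.I)) * z₁ +
      (starRingEnd ℂ) ((p 0 : ℂ) + (p 1 : ℂ) * Complex.I) * z₂ := by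
  simp [Bcl, projC, map_add, Complex.conj_ofReal]; ring

lemma key_hasFDerivAt (n r : ℕ) (A B : (Fin 4 → ℝ) →L[ℝ] ℂ) (q : Fin 4 → ℝ) :
    HasFDerivAt (fun p => (A p) ^ n * (B p) ^ r)
      ((((n : ℂ) * A q ^ (n - 1)) * B q ^ r) • A +
        (((r : ℂ) * B q ^ (r - 1)) * A q ^ n) • B) q := by
  have h1 : HasFDerivAt (fun p => (A p) ^ n) (((n : ℂ) * A q ^ (n - 1)) • A) q :=
    (hasDerivAt_pow n (A q)).comp_hasFDerivAt q (A.hasFDerivAt)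
  have h2 : HasFDerivAt (fun p => (B p) ^ r) (((r : ℂ) * B q ^ (r - 1)) • B) q :=
    (hasDerivAt_pow r (B q)).comp_hasFDerivAt q (B.hasFDerivAt)
  have : HasFDerivAt (fun p => (A p) ^ n * (B p) ^ r) _ q := h1.mul h2
  refine this.congr_fderiv ?_
  ext e
  simp [smul_smul]
  ring

lemma second_deriv (n r : ℕ) (A B : (Fin 4 → ℝ) →L[ℝ] ℂ) (p e : Fin 4 → ℝ) :
    fderiv ℝ (fun q => fderiv ℝ (fun x => (A x) ^ n * (B x) ^ r) q e) p e
    = ((n : ℂ) * A e) * ((((n - 1 : ℕ) : ℂ) * A p ^ (n - 1 - 1) * B p ^ r) * A e +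
        (((r : ℂ) * B p ^ (r - 1)) * A p ^ (n - 1)) * B e)
    + ((r : ℂ) * B e) * ((((n : ℂ) * A p ^ (n - 1) * B p ^ (r - 1)) * A e +
        ((((r - 1 : ℕ) : ℂ) * B p ^ (r - 1 - 1)) * A p ^ n) * B e)) := by
  have hinner : (fun q => fderiv ℝ (fun x => (A x) ^ n * (B x) ^ r) q e)
      = fun q => ((n : ℂ) * A e) * (A q ^ (n - 1) * B q ^ r) +
          ((r : ℂ) * B e) * (A q ^ n * B q ^ (r - 1)) := by
    funext q
    rw [(key_hasFDerivAt n r A B q).fderiv]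
    simp
    ring
  rw [hinner]
  have h1 := (key_hasFDerivAt (n - 1) r A B p).const_mul ((n : ℂ) * A e)
  have h2 := (key_hasFDerivAt n (r - 1) A B p).const_mul ((r : ℂ) * B e)
  rw [HasFDerivAt.fderiv (f := fun q => ((n : ℂ) * A e) * (A q ^ (n - 1) * B q ^ r) +
      ((r : ℂ) * B e) * (A q ^ n * B q ^ (r - 1))) (h1.add h2)]
  simp
  ring

lemma Acl_e0 (z₁ z₂ : ℂ) : Acl z₁ z₂ (Pi.single 0 1) = z₁ := by
  simp [Acl, projC, Pi.single_apply]
lemma Acl_e1 (z₁ z₂ : ℂ) : Acl z₁ z₂ (Pi.single 1 1) = z₁ * Complex.I := by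
  simp [Acl, projC, Pi.single_apply]
lemma Acl_e2 (z₁ z₂ : ℂ) : Acl z₁ z₂ (Pi.single 2 1) = z₂ := by
  simp [Acl, projC, Pi.single_apply]
lemma Acl_e3 (z₁ z₂ : ℂ) : Acl z₁ z₂ (Pi.single 3 1) = z₂ * Complex.I := by
  simp [Acl, projC, Pi.single_apply]
lemma Bcl_e0 (z₁ z₂ : ℂ) : Bcl z₁ z₂ (Pi.single 0 1) = z₂ := by
  simp [Bcl, projC, Pi.single_apply]
lemma Bcl_e1 (z₁ z₂ : ℂ) : Bcl z₁ z₂ (Pi.single 1 1) = -(z₂ * Complex.I) := by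
  simp [Bcl, projC, Pi.single_apply]
lemma Bcl_e2 (z₁ z₂ : ℂ) : Bcl z₁ z₂ (Pi.single 2 1) = -z₁ := by
  simp [Bcl, projC, Pi.single_apply]
lemma Bcl_e3 (z₁ z₂ : ℂ) : Bcl z₁ z₂ (Pi.single 3 1) = z₁ * Complex.I := by
  simp [Bcl, projC, Pi.single_apply]

/-- `F_k^m` is harmonic on `ℝ⁴`: the sum of its four pure second partial
derivatives vanishes identically. -/
theorem stmt_8 (k : ℕ) (m : ℤ) (hm0 : 0 ≤ m) (hmk : m ≤ (k : ℤ)) (z₁ z₂ : ℂ)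
    (p : Fin 4 → ℝ) :
    ∑ i : Fin 4,
      fderiv ℝ (fun q => fderiv ℝ (Fkm k m z₁ z₂) q (Pi.single i (1 : ℝ))) p
        (Pi.single i (1 : ℝ)) = 0 := by
  set n := m.toNat with hn
  set r := k - n with hr
  have hF : Fkm k m z₁ z₂ = fun x => (Acl z₁ z₂ x) ^ n * (Bcl z₁ z₂ x) ^ r := by
    funext x
    rw [Fkm, if_pos ⟨hm0, hmk⟩, Acl_apply, Bcl_apply]
  rw [hF]
  rw [Fin.sum_univ_four]
  rw [second_deriv, second_deriv, second_deriv, second_deriv,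
    Acl_e0, Acl_e1, Acl_e2, Acl_e3, Bcl_e0, Bcl_e1, Bcl_e2, Bcl_e3]
  set u := Acl z₁ z₂ p
  set v := Bcl z₁ z₂ p
  linear_combination ((((n : ℂ) * ((n - 1 : ℕ) : ℂ) * u ^ (n - 1 - 1) * v ^ r) +
    ((r : ℂ) * ((r - 1 : ℕ) : ℂ) * v ^ (r - 1 - 1) * u ^ n)) * (z₁ ^ 2 + z₂ ^ 2)) * Complex.I_sq
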